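/- Let A be a nonnegative compact linear operator on L²(X) with A^r = A (r ≥ 2) whose kernel contains no nonzero nonnegative function. Then the range R(A) admits a basis e₁, …, e_N consisting of nonnegative functions with pairwise essentially disjoint supports (equivalently, pairwise orthogonal nonnegative functions). -/

import Mathlib

open MeasureTheory Filter Set

namespace Stmt13Aux

variable {X : Type*} [MeasurableSpace X] {μ : Measure X}

/-! ### pointwise toolbox for `Lp ℝ 2 μ` -/

lemma eqz {f : Lp ℝ 2 μ} (h : ∀ᵐ x ∂μ, f x = 0) : f = 0 := by
  rw [Lp.eq_zero_iff_ae_eq_zero]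
  filter_upwards [h] with x h1
  simpa using h1

lemma le_of_ae {f h : Lp ℝ 2 μ} (hfh : ∀ᵐ x ∂μ, f x ≤ h x) : f ≤ h :=
  (Lp.coeFn_le f h).mp hfh

lemma nonneg_ae {f : Lp ℝ 2 μ} (hf : 0 ≤ f) : ∀ᵐ x ∂μ, 0 ≤ f x := by
  have := (Lp.coeFn_nonneg f).mpr hf
  filter_upwards [this] with x hx using hx

lemma le_ae {f h : Lp ℝ 2 μ} (hfh : f ≤ h) : ∀ᵐ x ∂μ, f x ≤ h x := by
  have := (Lp.coeFn_le f h).mpr hfh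
  filter_upwards [this] with x hx using hx

lemma ae_inf (f h : Lp ℝ 2 μ) : ∀ᵐ x ∂μ, (f ⊓ h) x = min (f x) (h x) := by
  filter_upwards [Lp.coeFn_inf f h] with x hx
  rw [hx, Pi.inf_apply]

lemma ae_sup (f h : Lp ℝ 2 μ) : ∀ᵐ x ∂μ, (f ⊔ h) x = max (f x) (h x) := by
  filter_upwards [Lp.coeFn_sup f h] with x hx
  rw [hx, Pi.sup_apply]

lemma ae_abs (f : Lp ℝ 2 μ) : ∀ᵐ x ∂μ, |f| x = |f x| :=
  Lp.coeFn_abs f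

lemma ae_sub (f h : Lp ℝ 2 μ) : ∀ᵐ x ∂μ, (f - h) x = f x - h x := by
  filter_upwards [Lp.coeFn_sub f h] with x hx
  rw [hx, Pi.sub_apply]

lemma ae_add (f h : Lp ℝ 2 μ) : ∀ᵐ x ∂μ, (f + h) x = f x + h x := by
  filter_upwards [Lp.coeFn_add f h] with x hx
  rw [hx, Pi.add_apply]

lemma ae_smul (c : ℝ) (f : Lp ℝ 2 μ) : ∀ᵐ x ∂μ, (c • f) x = c * f x := by
  filter_upwards [Lp.coeFn_smul c f] with x hx
  rw [hx, Pi.smul_apply, smul_eq_mul]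

lemma inf_eq_zero_ae {f h : Lp ℝ 2 μ} (hfh : f ⊓ h = 0) :
    ∀ᵐ x ∂μ, min (f x) (h x) = 0 := by
  have h1 := ae_inf f h
  rw [hfh] at h1
  filter_upwards [h1, Lp.coeFn_zero ℝ 2 μ] with x hx h0
  rw [← hx, h0, Pi.zero_apply]

lemma ae_sum {ι : Type*} (s : Finset ι) (w : ι → Lp ℝ 2 μ) :
    ∀ᵐ x ∂μ, (∑ j ∈ s, w j) x = ∑ j ∈ s, (w j) x := by
  classical
  induction s using Finset.induction with
  | empty => simpa using (Lp.coeFn_zero ℝ 2 μ).mono fun x hx => by simpa using hx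
  | insert a s' hnotmem ih =>
      filter_upwards [ae_add (w a) (∑ j ∈ s', w j), ih] with x h1 h2
      rw [Finset.sum_insert hnotmem, h1, h2, Finset.sum_insert hnotmem]

/-- real helper -/
lemma rmin {a b : ℝ} (h : min a b = 0) : a = 0 ∨ b = 0 := by
  rcases le_total a b with hab | hab
  · left; rwa [min_eq_left hab] at h
  · right; rwa [min_eq_right hab] at h

lemma rmin_zero_of_left {a b : ℝ} (ha : a = 0) (hb : 0 ≤ b) : min a b = 0 := by
  rw [ha, min_eq_left hb]

lemma rmin_zero_of_right {a b : ℝ} (ha : 0 ≤ a) (hb : b = 0) : min a b = 0 := by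
  rw [hb, min_eq_right ha]


/-- Pairwise disjoint nonnegative nonzero elements of `Lp` are linearly independent. -/
lemma linearIndependent_of_disjoint {ι : Type*} [Fintype ι] (f : ι → Lp ℝ 2 μ)
    (h0 : ∀ i, 0 ≤ f i) (hne : ∀ i, f i ≠ 0)
    (hd : ∀ i j, i ≠ j → f i ⊓ f j = 0) : LinearIndependent ℝ f := by
  rw [Fintype.linearIndependent_iff]
  intro c hc i
  by_contra hci
  apply hne i
  apply eqz
  have hsum : ∀ᵐ x ∂μ, ∑ j : ι, c j * (f j) x = 0 := by
    have h1 := ae_sum (Finset.univ) (fun j => c j • f j)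
    rw [hc] at h1
    have h2 : ∀ᵐ x ∂μ, ∀ j : ι, (c j • f j) x = c j * (f j) x :=
      ae_all_iff.mpr fun j => ae_smul (c j) (f j)
    filter_upwards [h1, h2, Lp.coeFn_zero ℝ 2 μ] with x hx1 hx2 hx3
    calc ∑ j : ι, c j * (f j) x = ∑ j : ι, (c j • f j) x := by
          exact Finset.sum_congr rfl fun j _ => (hx2 j).symm
      _ = (0 : Lp ℝ 2 μ) x := hx1.symm
      _ = 0 := by rw [hx3]; rfl
  have hdis : ∀ᵐ x ∂μ, ∀ j : ι, j ≠ i → min ((f i) x) ((f j) x) = 0 :=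
    ae_all_iff.mpr fun j => by
      by_cases hji : j = i
      · simp [hji]
      · exact (inf_eq_zero_ae (hd i j (Ne.symm hji))).mono fun x hx hne' => hx
  have hpos : ∀ᵐ x ∂μ, ∀ j : ι, 0 ≤ (f j) x := ae_all_iff.mpr fun j => nonneg_ae (h0 j)
  filter_upwards [hsum, hdis, hpos] with x h1 h2 h3
  by_contra hfx
  have hfi : 0 < (f i) x := (h3 i).lt_of_ne (Ne.symm hfx)
  have hzero : ∀ j : ι, j ≠ i → (f j) x = 0 := by
    intro j hj
    rcases rmin (h2 j hj) with h | h
    · exact absurd h (ne_of_gt hfi)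
    · exact h
  have : ∑ j : ι, c j * (f j) x = c i * (f i) x :=
    Finset.sum_eq_single i (fun j _ hj => by rw [hzero j hj, mul_zero]) (by simp)
  rw [this] at h1
  rcases mul_eq_zero.mp h1 with h | h
  · exact hci h
  · exact absurd h (ne_of_gt hfi)

/-- The submodule of elements of `V` "supported away from" `d`. -/
noncomputable def perpSubmodule (V : Submodule ℝ (Lp ℝ 2 μ)) (d : Lp ℝ 2 μ) (hd : 0 ≤ d) :
    Submodule ℝ (Lp ℝ 2 μ) where
  carrier := {f | f ∈ V ∧ |f| ⊓ d = 0}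
  zero_mem' := by
    refine ⟨V.zero_mem, eqz ?_⟩
    filter_upwards [ae_inf |(0 : Lp ℝ 2 μ)| d, ae_abs (0 : Lp ℝ 2 μ),
      Lp.coeFn_zero ℝ 2 μ, nonneg_ae hd] with x h1 h2 h3 h4
    rw [h1, h2, h3]
    simpa using rmin_zero_of_left rfl h4
  add_mem' := by
    rintro f f' ⟨hfV, hf⟩ ⟨hf'V, hf'⟩
    refine ⟨V.add_mem hfV hf'V, eqz ?_⟩
    filter_upwards [ae_inf |f + f'| d, ae_abs (f + f'), ae_add f f',
      inf_eq_zero_ae hf, inf_eq_zero_ae hf', ae_abs f, ae_abs f',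
      nonneg_ae hd] with x h1 h2 h3 h4 h5 h6 h7 h8
    rw [h1, h2, h3]
    rcases eq_or_lt_of_le h8 with hdx | hdx
    · exact rmin_zero_of_right (abs_nonneg _) hdx.symm
    · rw [h6] at h4; rw [h7] at h5
      have hfx : f x = 0 := by
        rcases rmin h4 with h | h
        · exact abs_eq_zero.mp h
        · exact absurd h (ne_of_gt hdx)
      have hfx' : f' x = 0 := by
        rcases rmin h5 with h | h
        · exact abs_eq_zero.mp h
        · exact absurd h (ne_of_gt hdx)
      rw [hfx, hfx', add_zero, abs_zero]
      exact rmin_zero_of_left rfl h8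
  smul_mem' := by
    rintro c f ⟨hfV, hf⟩
    refine ⟨V.smul_mem c hfV, eqz ?_⟩
    filter_upwards [ae_inf |c • f| d, ae_abs (c • f), ae_smul c f,
      inf_eq_zero_ae hf, ae_abs f, nonneg_ae hd] with x h1 h2 h3 h4 h5 h6
    rw [h1, h2, h3]
    rcases eq_or_lt_of_le h6 with hdx | hdx
    · exact rmin_zero_of_right (abs_nonneg _) hdx.symm
    · rw [h5] at h4
      have hfx : f x = 0 := by
        rcases rmin h4 with h | h
        · exact abs_eq_zero.mp h
        · exact absurd h (ne_of_gt hdx)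
      rw [hfx, mul_zero, abs_zero]
      exact rmin_zero_of_left rfl h6

lemma mem_perpSubmodule {V : Submodule ℝ (Lp ℝ 2 μ)} {d : Lp ℝ 2 μ} {hd : 0 ≤ d}
    {f : Lp ℝ 2 μ} : f ∈ perpSubmodule V d hd ↔ f ∈ V ∧ |f| ⊓ d = 0 := Iff.rfl


set_option maxHeartbeats 2000000 in
set_option synthInstance.maxHeartbeats 1000000 in
lemma exists_disjoint_basis :
    ∀ (n : ℕ) (V : Submodule ℝ (Lp ℝ 2 μ)),
      (∀ x ∈ V, ∀ y ∈ V, x ⊓ y ∈ V) → FiniteDimensional ℝ V →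
      Module.finrank ℝ ↥V = n →
      ∃ b : Module.Basis (Fin n) ℝ ↥V,
        (∀ j, 0 ≤ ((b j : ↥V) : Lp ℝ 2 μ)) ∧
        ∀ i j, i ≠ j → ((b i : ↥V) : Lp ℝ 2 μ) ⊓ ((b j : ↥V) : Lp ℝ 2 μ) = 0 := by
  intro n
  induction n using Nat.strong_induction_on with
  | _ n IH =>
  intro V hV hfd hrank
  haveI : FiniteDimensional ℝ ↥V := hfd
  rcases Nat.eq_zero_or_pos n with hn0 | hnpos
  · subst hn0
    exact ⟨Module.finBasisOfFinrankEq ℝ ↥V hrank, fun j => j.elim0, fun i _ _ => i.elim0⟩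
  -- sup and abs closure
  have hVsup : ∀ x ∈ V, ∀ y ∈ V, x ⊔ y ∈ V := by
    intro x hx y hy
    have hxy : x ⊔ y = -((-x) ⊓ (-y)) := by rw [neg_inf, neg_neg, neg_neg]
    rw [hxy]
    exact V.neg_mem (hV _ (V.neg_mem hx) _ (V.neg_mem hy))
  have hVabs : ∀ x ∈ V, |x| ∈ V := fun x hx => hVsup x hx (-x) (V.neg_mem hx)
  -- the order unit g
  set v : Module.Basis (Fin n) ℝ ↥V := (Module.finBasis ℝ ↥V).reindex (finCongr hrank) with hv
  set g : Lp ℝ 2 μ := ∑ j : Fin n, |((v j : ↥V) : Lp ℝ 2 μ)| with hg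
  have hgV : g ∈ V := V.sum_mem fun j _ => hVabs _ (v j).2
  have hg_ae : ∀ᵐ x ∂μ, g x = ∑ j : Fin n, |((v j : ↥V) : Lp ℝ 2 μ) x| := by
    have h1 := ae_sum (Finset.univ) (fun j : Fin n => |((v j : ↥V) : Lp ℝ 2 μ)|)
    have h2 : ∀ᵐ x ∂μ, ∀ j : Fin n, |((v j : ↥V) : Lp ℝ 2 μ)| x = |((v j : ↥V) : Lp ℝ 2 μ) x| :=
      ae_all_iff.mpr fun j => ae_abs _
    filter_upwards [h1, h2] with x hx1 hx2
    rw [hg, hx1]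
    exact Finset.sum_congr rfl fun j _ => hx2 j
  have hg0ae : ∀ᵐ x ∂μ, 0 ≤ g x := by
    filter_upwards [hg_ae] with x hx
    rw [hx]; positivity
  have hg0 : 0 ≤ g := (Lp.coeFn_nonneg g).mp (by filter_upwards [hg0ae] with x hx using hx)
  -- order unit property
  have hunit : ∀ f, f ∈ V → ∃ C : ℝ, 1 ≤ C ∧ ∀ᵐ x ∂μ, |f x| ≤ C * g x := by
    intro f hf
    set c : Fin n → ℝ := fun j => v.repr ⟨f, hf⟩ j with hc
    have hrepr : ∑ j : Fin n, c j • ((v j : ↥V) : Lp ℝ 2 μ) = f := by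
      have h1 := v.sum_repr ⟨f, hf⟩
      have h2 := congrArg (Subtype.val) h1
      push_cast at h2
      simpa using h2
    refine ⟨1 + ∑ j : Fin n, |c j|, by
      have : (0:ℝ) ≤ ∑ j : Fin n, |c j| := Finset.sum_nonneg fun j _ => abs_nonneg _
      linarith, ?_⟩
    have hae : ∀ᵐ x ∂μ, f x = ∑ j : Fin n, (c j • ((v j : ↥V) : Lp ℝ 2 μ)) x := by
      rw [← hrepr]
      exact ae_sum _ _
    have hsm : ∀ᵐ x ∂μ, ∀ j : Fin n, (c j • ((v j : ↥V) : Lp ℝ 2 μ)) x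
        = c j * ((v j : ↥V) : Lp ℝ 2 μ) x := ae_all_iff.mpr fun j => ae_smul _ _
    filter_upwards [hg_ae, hae, hsm] with x h1 h2 h3
    set C := 1 + ∑ j : Fin n, |c j| with hC
    have hCj : ∀ j : Fin n, |c j| ≤ C := by
      intro j
      have : |c j| ≤ ∑ k : Fin n, |c k| :=
        Finset.single_le_sum (fun k _ => abs_nonneg (c k)) (Finset.mem_univ j)
      linarith
    calc |f x| = |∑ j : Fin n, c j * ((v j : ↥V) : Lp ℝ 2 μ) x| := by
          rw [h2]; congr 1; exact Finset.sum_congr rfl fun j _ => h3 j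
      _ ≤ ∑ j : Fin n, |c j * ((v j : ↥V) : Lp ℝ 2 μ) x| := Finset.abs_sum_le_sum_abs _ _
      _ = ∑ j : Fin n, |c j| * |((v j : ↥V) : Lp ℝ 2 μ) x| := by
          exact Finset.sum_congr rfl fun j _ => abs_mul _ _
      _ ≤ ∑ j : Fin n, C * |((v j : ↥V) : Lp ℝ 2 μ) x| :=
          Finset.sum_le_sum fun j _ => mul_le_mul_of_nonneg_right (hCj j) (abs_nonneg _)
      _ = C * ∑ j : Fin n, |((v j : ↥V) : Lp ℝ 2 μ) x| := by rw [Finset.mul_sum]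
      _ = C * g x := by rw [h1]
  have hgne : g ≠ 0 := by
    intro hgeq
    refine v.ne_zero ⟨0, hnpos⟩ ?_
    have hvj0 : ((v ⟨0, hnpos⟩ : ↥V) : Lp ℝ 2 μ) = 0 := by
      apply eqz
      have h0 : ∀ᵐ x ∂μ, g x = 0 := by
        rw [hgeq]
        filter_upwards [Lp.coeFn_zero ℝ 2 μ] with x hx using by simpa using hx
      filter_upwards [hg_ae, h0] with x h1 h2
      rw [h1] at h2
      have := Finset.sum_eq_zero_iff_of_nonneg (fun j _ => abs_nonneg _) |>.mp h2
      exact abs_eq_zero.mp (this ⟨0, hnpos⟩ (Finset.mem_univ _))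
    exact Subtype.ext hvj0
  -- smul order helpers
  have hsmul_nonneg : ∀ (c : ℝ), 0 ≤ c → ∀ f : Lp ℝ 2 μ, 0 ≤ f → 0 ≤ c • f := by
    intro c hc f hf
    refine (Lp.coeFn_nonneg _).mp ?_
    filter_upwards [ae_smul c f, nonneg_ae hf] with x h1 h2
    show (0 : ℝ) ≤ (c • f) x
    rw [h1]; exact mul_nonneg hc h2
  have hsmul_mono : ∀ (c : ℝ), 0 ≤ c → ∀ f f' : Lp ℝ 2 μ, f ≤ f' → c • f ≤ c • f' := by
    intro c hc f f' hff
    apply le_of_ae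
    filter_upwards [ae_smul c f, ae_smul c f', le_ae hff] with x h1 h2 h3
    rw [h1, h2]; exact mul_le_mul_of_nonneg_left h3 hc
  -- the compact convex set K
  set K : Set (Lp ℝ 2 μ) := {f | f ∈ V ∧ 0 ≤ f ∧ f ≤ g} with hK
  have hKconv : Convex ℝ K := by
    rintro x ⟨hxV, hx0, hxg⟩ y ⟨hyV, hy0, hyg⟩ a b ha hb hab
    refine ⟨V.add_mem (V.smul_mem a hxV) (V.smul_mem b hyV),
      add_nonneg (hsmul_nonneg a ha x hx0) (hsmul_nonneg b hb y hy0), ?_⟩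
    calc a • x + b • y ≤ a • g + b • g :=
          add_le_add (hsmul_mono a ha x g hxg) (hsmul_mono b hb y g hyg)
      _ = g := by rw [← add_smul, hab, one_smul]
  have hKcomp : IsCompact K := by
    have hKim : K = (Subtype.val '' {w : ↥V | 0 ≤ (w : Lp ℝ 2 μ) ∧ (w : Lp ℝ 2 μ) ≤ g}) := by
      ext x
      constructor
      · rintro ⟨hxV, h0, h1⟩; exact ⟨⟨x, hxV⟩, ⟨h0, h1⟩, rfl⟩
      · rintro ⟨w, ⟨h0, h1⟩, rfl⟩; exact ⟨w.2, h0, h1⟩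
    have hK'closed : IsClosed {w : ↥V | 0 ≤ (w : Lp ℝ 2 μ) ∧ (w : Lp ℝ 2 μ) ≤ g} := by
      have h1 : IsClosed {w : ↥V | 0 ≤ (w : Lp ℝ 2 μ)} :=
        (isClosed_Ici (a := (0 : Lp ℝ 2 μ))).preimage continuous_subtype_val
      have h2 : IsClosed {w : ↥V | (w : Lp ℝ 2 μ) ≤ g} :=
        (isClosed_Iic (a := g)).preimage continuous_subtype_val
      exact h1.inter h2
    have hK'bdd : Bornology.IsBounded {w : ↥V | 0 ≤ (w : Lp ℝ 2 μ) ∧ (w : Lp ℝ 2 μ) ≤ g} := by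
      apply Bornology.IsBounded.subset (Metric.isBounded_closedBall (x := (0 : ↥V)) (r := ‖g‖))
      rintro w ⟨h0, h1⟩
      rw [Metric.mem_closedBall, dist_zero_right]
      show ‖(w : Lp ℝ 2 μ)‖ ≤ ‖g‖
      apply norm_le_norm_of_abs_le_abs
      apply le_of_ae
      filter_upwards [ae_abs (w : Lp ℝ 2 μ), ae_abs g, nonneg_ae h0, le_ae h1,
        nonneg_ae hg0] with x ha1 ha2 ha3 ha4 ha5
      rw [ha1, ha2, abs_of_nonneg ha3, abs_of_nonneg ha5]
      exact ha4
    rw [hKim]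
    exact (Metric.isCompact_of_isClosed_isBounded hK'closed hK'bdd).image continuous_subtype_val
  by_cases hext : ∃ e ∈ K.extremePoints ℝ, e ≠ 0 ∧ e ≠ g
  · -- nondegenerate case: a nontrivial component exists
    obtain ⟨e, heK, hene0, heneg⟩ := hext
    obtain ⟨heV, he0, heg⟩ := extremePoints_subset heK
    -- e and g - e are disjoint
    have hw : e ⊓ (g - e) = 0 := by
      set w := e ⊓ (g - e) with hwdef
      have hwV : w ∈ V := hV _ heV _ (V.sub_mem hgV heV)
      have h0w : 0 ≤ w := le_inf he0 (sub_nonneg.mpr heg)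
      have hwle : w ≤ e := inf_le_left
      have hwle' : w ≤ g - e := inf_le_right
      have h1 : e + w ∈ K := by
        refine ⟨V.add_mem heV hwV, add_nonneg he0 h0w, ?_⟩
        have := add_le_add (le_refl e) hwle'
        rwa [add_sub_cancel] at this
      have h2 : e - w ∈ K :=
        ⟨V.sub_mem heV hwV, sub_nonneg.mpr hwle, (sub_le_self _ h0w).trans heg⟩
      have hmem : e ∈ openSegment ℝ (e - w) (e + w) :=
        ⟨1 / 2, 1 / 2, by norm_num, by norm_num, by norm_num, by module⟩
      obtain ⟨-, hEP⟩ := (mem_extremePoints (𝕜 := ℝ)).mp heK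
      obtain ⟨-, hh2⟩ := hEP (e - w) h2 (e + w) h1 hmem
      have : e + w = e + 0 := by rw [add_zero]; exact hh2
      exact add_left_cancel this
    have hd₁ : (0 : Lp ℝ 2 μ) ≤ g - e := sub_nonneg.mpr heg
    set V₁ := perpSubmodule V (g - e) hd₁ with hV₁
    set V₂ := perpSubmodule V e he0 with hV₂
    have hdisj_ae := inf_eq_zero_ae hw
    have hdisj_ae' : ∀ᵐ x ∂μ, min (e x) (g x - e x) = 0 := by
      filter_upwards [hdisj_ae, ae_sub g e] with x h1 h2
      rw [h2] at h1; exact h1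
    have he0ae := nonneg_ae he0
    have hegae := le_ae heg
    -- memberships
    have heV₁ : e ∈ V₁ := by
      refine ⟨heV, eqz ?_⟩
      filter_upwards [ae_inf |e| (g - e), ae_abs e, ae_sub g e, hdisj_ae', he0ae] with x h1 h2 h3 h4 h5
      rw [h1, h2, h3, abs_of_nonneg h5]
      exact h4
    have hgeV₂ : g - e ∈ V₂ := by
      refine ⟨V.sub_mem hgV heV, eqz ?_⟩
      filter_upwards [ae_inf |g - e| e, ae_abs (g - e), ae_sub g e, hdisj_ae',
        he0ae, hegae] with x h1 h2 h3 h4 h5 h6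
      rw [h1, h2, h3, abs_of_nonneg (by linarith), min_comm]
      exact h4
    -- inf-closure of the pieces
    have hperp_inf : ∀ (d : Lp ℝ 2 μ) (hd : 0 ≤ d),
        ∀ x ∈ perpSubmodule V d hd, ∀ y ∈ perpSubmodule V d hd,
          x ⊓ y ∈ perpSubmodule V d hd := by
      rintro d hd x ⟨hxV, hx⟩ y ⟨hyV, hy⟩
      refine ⟨hV _ hxV _ hyV, eqz ?_⟩
      filter_upwards [ae_inf |x ⊓ y| d, ae_abs (x ⊓ y), ae_inf x y,
        inf_eq_zero_ae hx, inf_eq_zero_ae hy, ae_abs x, ae_abs y, nonneg_ae hd]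
        with t h1 h2 h3 h4 h5 h6 h7 h8
      rw [h1, h2, h3]
      rcases eq_or_lt_of_le h8 with hdx | hdx
      · exact rmin_zero_of_right (abs_nonneg _) hdx.symm
      · rw [h6] at h4; rw [h7] at h5
        have hx0 : x t = 0 := by
          rcases rmin h4 with h | h
          · exact abs_eq_zero.mp h
          · exact absurd h (ne_of_gt hdx)
        have hy0 : y t = 0 := by
          rcases rmin h5 with h | h
          · exact abs_eq_zero.mp h
          · exact absurd h (ne_of_gt hdx)
        rw [hx0, hy0, min_self, abs_zero]
        exact rmin_zero_of_left rfl h8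
    -- V₁ ⊓ V₂ = ⊥
    have hbot : V₁ ⊓ V₂ = ⊥ := by
      rw [eq_bot_iff]
      rintro f ⟨⟨hfV, hf1⟩, -, hf2⟩
      obtain ⟨C, hC, hCae⟩ := hunit f hfV
      rw [Submodule.mem_bot]
      apply eqz
      filter_upwards [inf_eq_zero_ae hf1, inf_eq_zero_ae hf2, ae_abs f, ae_sub g e,
        hCae, he0ae, hegae] with x h1 h2 h3 h4 h5 h6 h7
      rw [h3] at h1 h2
      rw [h4] at h1
      by_contra hfx
      have habs : 0 < |f x| := abs_pos.mpr hfx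
      have hge : g x - e x = 0 := by
        rcases rmin h1 with h | h
        · exact absurd h (ne_of_gt habs)
        · exact h
      have hex : e x = 0 := by
        rcases rmin h2 with h | h
        · exact absurd h (ne_of_gt habs)
        · exact h
      have hgx : g x = 0 := by linarith
      rw [hgx, mul_zero] at h5
      linarith
    -- V₁ ⊔ V₂ = V
    have hV₁le : V₁ ≤ V := fun f hf => hf.1
    have hV₂le : V₂ ≤ V := fun f hf => hf.1
    have hsup' : V₁ ⊔ V₂ = V := by
      refine le_antisymm (sup_le hV₁le hV₂le) ?_
      intro f hfV
      have hp : ∀ h, h ∈ V → 0 ≤ h → h ∈ V₁ ⊔ V₂ := by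
        intro h hhV hh0
        obtain ⟨C, hC, hCae⟩ := hunit h hhV
        set h₁ := h ⊓ (C • e) with hh₁
        have hh₁V : h₁ ∈ V := hV _ hhV _ (V.smul_mem C heV)
        have hh0ae := nonneg_ae hh0
        have h₁mem : h₁ ∈ V₁ := by
          refine ⟨hh₁V, eqz ?_⟩
          filter_upwards [ae_inf |h₁| (g - e), ae_abs h₁, ae_sub g e, ae_inf h (C • e),
            ae_smul C e, hdisj_ae', he0ae, hegae, hh0ae, hCae] with x k1 k2 k3 k4 k5 k6 k7 k8 k9 k10
          rw [k1, k2, k3, k4, k5]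
          rcases rmin k6 with hex | hgex
          · rw [hex, mul_zero]
            rw [rmin_zero_of_right k9 rfl, abs_zero]
            exact rmin_zero_of_left rfl (by linarith)
          · exact rmin_zero_of_right (abs_nonneg _) hgex
        have h₂mem : h - h₁ ∈ V₂ := by
          refine ⟨V.sub_mem hhV hh₁V, eqz ?_⟩
          filter_upwards [ae_inf |h - h₁| e, ae_abs (h - h₁), ae_sub h h₁, ae_inf h (C • e),
            ae_smul C e, hdisj_ae', he0ae, hegae, hh0ae, hCae] with x k1 k2 k3 k4 k5 k6 k7 k8 k9 k10
          rw [k1, k2, k3, k4, k5]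
          rcases rmin k6 with hex | hgex
          · exact rmin_zero_of_right (abs_nonneg _) hex
          · have hegx : e x = g x := by linarith
            have hhle : h x ≤ C * e x := by
              rw [hegx]
              calc h x ≤ |h x| := le_abs_self _
                _ ≤ C * g x := k10
            rw [min_eq_left hhle, sub_self, abs_zero]
            exact rmin_zero_of_left rfl k7
        have hsum : h = h₁ + (h - h₁) := by rw [add_sub_cancel]
        rw [hsum]
        exact Submodule.add_mem _ (Submodule.mem_sup_left h₁mem) (Submodule.mem_sup_right h₂mem)
      have h1 := hp _ (hVsup _ hfV _ V.zero_mem) le_sup_right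
      have h2 := hp _ (hVsup _ (V.neg_mem hfV) _ V.zero_mem) le_sup_right
      have hdec : f = (f ⊔ 0) - ((-f) ⊔ 0) := by
        rw [← posPart_def, ← negPart_def, posPart_sub_negPart]
      rw [hdec]
      exact Submodule.sub_mem _ h1 h2
    -- dimension bookkeeping
    haveI hfd₁ : FiniteDimensional ℝ ↥V₁ := Submodule.finiteDimensional_of_le hV₁le
    haveI hfd₂ : FiniteDimensional ℝ ↥V₂ := Submodule.finiteDimensional_of_le hV₂le
    set n₁ := Module.finrank ℝ ↥V₁ with hn₁
    set n₂ := Module.finrank ℝ ↥V₂ with hn₂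
    have hsumr : n₁ + n₂ = n := by
      have h1 := Submodule.finrank_sup_add_finrank_inf_eq V₁ V₂
      rw [hbot, hsup'] at h1
      simpa [hrank, finrank_bot] using h1.symm
    have hn₁pos : 0 < n₁ := by
      haveI : Nontrivial ↥V₁ :=
        nontrivial_of_ne ⟨e, heV₁⟩ 0 (by simp [Subtype.ext_iff, hene0])
      exact Module.finrank_pos
    have hn₂pos : 0 < n₂ := by
      have hgene : g - e ≠ 0 := sub_ne_zero.mpr (Ne.symm heneg)
      haveI : Nontrivial ↥V₂ :=
        nontrivial_of_ne ⟨g - e, hgeV₂⟩ 0 (by simp [Subtype.ext_iff, hgene])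
      exact Module.finrank_pos
    obtain ⟨b₁, hb₁0, hb₁d⟩ := IH n₁ (by omega) V₁ (hperp_inf _ _) hfd₁ rfl
    obtain ⟨b₂, hb₂0, hb₂d⟩ := IH n₂ (by omega) V₂ (hperp_inf _ _) hfd₂ rfl
    -- cross disjointness
    have hcross : ∀ u, u ∈ V₁ → 0 ≤ u → ∀ w, w ∈ V₂ → 0 ≤ w → u ⊓ w = 0 := by
      rintro u ⟨huV, hu⟩ hu0 w ⟨hwV, hwp⟩ hw0
      obtain ⟨C, hC, hCae⟩ := hunit u huV
      apply eqz
      filter_upwards [ae_inf u w, inf_eq_zero_ae hu, inf_eq_zero_ae hwp,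
        ae_abs u, ae_abs w, ae_sub g e, hCae, nonneg_ae hu0, nonneg_ae hw0,
        he0ae, hegae] with x k1 k2 k3 k4 k5 k6 k7 k8 k9 k10 k11
      rw [k1]
      rw [k4, k6] at k2
      rw [k5] at k3
      rcases eq_or_lt_of_le k8 with hux | hux
      · exact rmin_zero_of_left hux.symm k9
      · have hge : g x - e x = 0 := by
          rcases rmin k2 with h | h
          · exact absurd h (ne_of_gt (abs_pos.mpr (ne_of_gt hux)))
          · exact h
        rcases eq_or_lt_of_le k9 with hwx | hwx
        · exact rmin_zero_of_right k8 hwx.symm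
        · have hex : e x = 0 := by
            rcases rmin k3 with h | h
            · exact absurd h (ne_of_gt (abs_pos.mpr (ne_of_gt hwx)))
            · exact h
          have : g x = 0 := by linarith
          rw [this, mul_zero] at k7
          have : u x ≤ 0 := (le_abs_self _).trans k7
          linarith
    -- combine the two bases
    have hV₁mem : ∀ i : Fin n₁, ((b₁ i : ↥V₁) : Lp ℝ 2 μ) ∈ V := fun i => hV₁le (b₁ i).2
    have hV₂mem : ∀ i : Fin n₂, ((b₂ i : ↥V₂) : Lp ℝ 2 μ) ∈ V := fun i => hV₂le (b₂ i).2
    set uE : Fin n₁ ⊕ Fin n₂ → Lp ℝ 2 μ :=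
      Sum.elim (fun i => ((b₁ i : ↥V₁) : Lp ℝ 2 μ)) (fun i => ((b₂ i : ↥V₂) : Lp ℝ 2 μ)) with huE
    have huE0 : ∀ k, 0 ≤ uE k := by
      rintro (i | i)
      · exact hb₁0 i
      · exact hb₂0 i
    have huEne : ∀ k, uE k ≠ 0 := by
      rintro (i | i) hzero
      · exact b₁.ne_zero i (Subtype.ext hzero)
      · exact b₂.ne_zero i (Subtype.ext hzero)
    have huEd : ∀ k l, k ≠ l → uE k ⊓ uE l = 0 := by
      rintro (i | i) (j | j) hkl
      · exact hb₁d i j (fun h => hkl (by rw [h]))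
      · exact hcross _ (b₁ i).2 (hb₁0 i) _ (b₂ j).2 (hb₂0 j)
      · rw [inf_comm]
        exact hcross _ (b₁ j).2 (hb₁0 j) _ (b₂ i).2 (hb₂0 i)
      · exact hb₂d i j (fun h => hkl (by rw [h]))
    have hliE : LinearIndependent ℝ uE := linearIndependent_of_disjoint uE huE0 huEne huEd
    set u : Fin n₁ ⊕ Fin n₂ → ↥V :=
      Sum.elim (fun i => ⟨((b₁ i : ↥V₁) : Lp ℝ 2 μ), hV₁mem i⟩)
        (fun i => ⟨((b₂ i : ↥V₂) : Lp ℝ 2 μ), hV₂mem i⟩) with hu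
    have hcomp : (V.subtype : ↥V →ₗ[ℝ] Lp ℝ 2 μ) ∘ u = uE := by
      funext k
      rcases k with i | i <;> rfl
    have hli : LinearIndependent ℝ u := by
      apply LinearIndependent.of_comp V.subtype
      rw [hcomp]
      exact hliE
    haveI : Nonempty (Fin n₁ ⊕ Fin n₂) := ⟨Sum.inl ⟨0, hn₁pos⟩⟩
    have hcard : Fintype.card (Fin n₁ ⊕ Fin n₂) = Module.finrank ℝ ↥V := by
      simp [hsumr, hrank]
    set B := basisOfLinearIndependentOfCardEqFinrank hli hcard with hB
    have hBapp : ∀ k, B k = u k := by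
      intro k
      rw [hB, coe_basisOfLinearIndependentOfCardEqFinrank]
    set eqv : (Fin n₁ ⊕ Fin n₂) ≃ Fin n :=
      finSumFinEquiv.trans (finCongr hsumr) with heqv
    refine ⟨B.reindex eqv, ?_, ?_⟩
    · intro j
      rw [Module.Basis.reindex_apply, hBapp]
      rcases eqv.symm j with i | i
      · exact hb₁0 i
      · exact hb₂0 i
    · intro i j hij
      rw [Module.Basis.reindex_apply, Module.Basis.reindex_apply, hBapp, hBapp]
      have hne : eqv.symm i ≠ eqv.symm j := fun h => hij (by
        have := congrArg eqv h
        simpa using this)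
      revert hne
      rcases eqv.symm i with k | k <;> rcases eqv.symm j with l | l <;> intro hne
      · exact hb₁d k l (fun h => hne (by rw [h]))
      · exact hcross _ (b₁ k).2 (hb₁0 k) _ (b₂ l).2 (hb₂0 l)
      · rw [inf_comm]
        exact hcross _ (b₁ l).2 (hb₁0 l) _ (b₂ k).2 (hb₂0 k)
      · exact hb₂d k l (fun h => hne (by rw [h]))
  · -- degenerate case: K is the segment [0, g], so V is one-dimensional
    push_neg at hext
    have hsub : K ⊆ segment ℝ (0 : Lp ℝ 2 μ) g := by
      have hseg_closed : IsClosed (segment ℝ (0 : Lp ℝ 2 μ) g) := by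
        rw [segment_eq_image]
        apply IsCompact.isClosed
        apply isCompact_Icc.image
        fun_prop
      rw [← closure_convexHull_extremePoints hKcomp hKconv]
      apply closure_minimal (convexHull_min ?_ (convex_segment _ _)) hseg_closed
      intro p hp
      rcases eq_or_ne p 0 with rfl | hne
      · exact left_mem_segment _ _ _
      · rw [hext p hp hne]
        exact right_mem_segment _ _ _
    have hspan : ∀ w : ↥V, ∃ t : ℝ, (w : Lp ℝ 2 μ) = t • g := by
      have hpos : ∀ f, f ∈ V → 0 ≤ f → ∃ t : ℝ, f = t • g := by
        intro f hf hf0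
        obtain ⟨C, hC1, hCae⟩ := hunit f hf
        have hCpos : (0 : ℝ) < C := by linarith
        have hfK : (C⁻¹) • f ∈ K := by
          refine ⟨V.smul_mem _ hf, hsmul_nonneg _ (by positivity) _ hf0, ?_⟩
          apply le_of_ae
          filter_upwards [ae_smul C⁻¹ f, hCae, nonneg_ae hf0, nonneg_ae hg0] with x h1 h2 h3 h4
          rw [h1]
          rw [abs_of_nonneg h3] at h2
          calc C⁻¹ * f x ≤ C⁻¹ * (C * g x) := by
                apply mul_le_mul_of_nonneg_left h2 (by positivity)
            _ = g x := by field_simp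
        obtain ⟨a, b, ha, hb, hab, heq⟩ := hsub hfK
        refine ⟨C * b, ?_⟩
        have h1 : C⁻¹ • f = b • g := by rw [← heq]; simp
        calc f = C • (C⁻¹ • f) := by
              rw [smul_smul, mul_inv_cancel₀ (ne_of_gt hCpos), one_smul]
          _ = C • (b • g) := by rw [h1]
          _ = (C * b) • g := by rw [smul_smul]
      intro w
      obtain ⟨t1, ht1⟩ := hpos _ (hVsup _ w.2 _ V.zero_mem) le_sup_right
      obtain ⟨t2, ht2⟩ := hpos _ (hVsup _ (V.neg_mem w.2) _ V.zero_mem) le_sup_right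
      refine ⟨t1 - t2, ?_⟩
      have hdec : (w : Lp ℝ 2 μ) = ((w : Lp ℝ 2 μ) ⊔ 0) - ((-(w : Lp ℝ 2 μ)) ⊔ 0) := by
        rw [← posPart_def, ← negPart_def, posPart_sub_negPart]
      rw [hdec, ht1, ht2, sub_smul]
    have hgVne : (⟨g, hgV⟩ : ↥V) ≠ 0 := by
      simp only [ne_eq, Submodule.mk_eq_zero]
      exact hgne
    have htop : (⊤ : Submodule ℝ ↥V) = Submodule.span ℝ {(⟨g, hgV⟩ : ↥V)} := by
      refine le_antisymm ?_ le_top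
      intro w _
      obtain ⟨t, ht⟩ := hspan w
      have hwt : w = t • (⟨g, hgV⟩ : ↥V) := Subtype.ext (by simpa using ht)
      rw [hwt]
      exact Submodule.smul_mem _ _ (Submodule.mem_span_singleton_self _)
    have hn1 : n = 1 := by
      rw [← hrank, ← finrank_top ℝ ↥V, htop, finrank_span_singleton hgVne]
    subst hn1
    have hli : LinearIndependent ℝ (fun _ : Fin 1 => (⟨g, hgV⟩ : ↥V)) :=
      linearIndependent_unique_iff.mpr hgVne
    have hcard : Fintype.card (Fin 1) = Module.finrank ℝ ↥V := by simp [hrank]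
    refine ⟨basisOfLinearIndependentOfCardEqFinrank hli hcard, ?_, ?_⟩
    · intro j
      rw [coe_basisOfLinearIndependentOfCardEqFinrank]
      exact hg0
    · intro i j hij
      exact absurd (Subsingleton.elim i j) hij

end Stmt13Aux

open Stmt13Aux

set_option maxHeartbeats 1000000 in
set_option synthInstance.maxHeartbeats 1000000 in
theorem stmt13 {X : Type*} [MeasurableSpace X] (μ : Measure X) [IsFiniteMeasure μ]
    (A : Lp ℝ 2 μ →L[ℝ] Lp ℝ 2 μ) (hcompact : IsCompactOperator A)
    (hpos : ∀ f : Lp ℝ 2 μ, 0 ≤ f → 0 ≤ A f)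
    (r : ℕ) (hr : 2 ≤ r) (hpot : A ^ r = A)
    (hker : ∀ h : Lp ℝ 2 μ, A h = 0 → 0 ≤ h → h = 0) :
    ∃ (N : ℕ) (b : Module.Basis (Fin N) ℝ (LinearMap.range (A : Lp ℝ 2 μ →ₗ[ℝ] Lp ℝ 2 μ))),
      (∀ j, 0 ≤ (b j : Lp ℝ 2 μ)) ∧
      ∀ i j, i ≠ j →
        μ (Function.support ((b i : Lp ℝ 2 μ) : X → ℝ) ∩
           Function.support ((b j : Lp ℝ 2 μ) : X → ℝ)) = 0 := by
  obtain ⟨s, rfl⟩ : ∃ s, r = 2 + s := ⟨r - 2, by omega⟩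
  set P : Lp ℝ 2 μ →L[ℝ] Lp ℝ 2 μ := A ^ (s + 1) with hP
  have hApow : ∀ (k : ℕ) (f : Lp ℝ 2 μ), 0 ≤ f → 0 ≤ (A ^ k) f := by
    intro k
    induction k with
    | zero => intro f hf; simpa using hf
    | succ k ih =>
        intro f hf
        rw [pow_succ, ContinuousLinearMap.mul_apply]
        exact ih (A f) (hpos f hf)
  have hposP : ∀ f : Lp ℝ 2 μ, 0 ≤ f → 0 ≤ P f := hApow (s + 1)
  have hmono : ∀ {x y : Lp ℝ 2 μ}, x ≤ y → P x ≤ P y := by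
    intro x y h
    have h1 := hposP (y - x) (sub_nonneg.mpr h)
    rw [map_sub] at h1
    exact sub_nonneg.mp h1
  have hPA : ∀ x, P (A x) = A x := by
    have h1 : P * A = A := by
      rw [hP, ← pow_succ, show s + 1 + 1 = 2 + s by omega, hpot]
    intro x
    calc P (A x) = (P * A) x := (ContinuousLinearMap.mul_apply _ _ _).symm
      _ = A x := by rw [h1]
  have hAP : ∀ x, A (P x) = A x := by
    have h1 : A * P = A := by
      rw [hP, ← pow_succ', show s + 1 + 1 = 2 + s by omega, hpot]
    intro x
    calc A (P x) = (A * P) x := (ContinuousLinearMap.mul_apply _ _ _).symm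
      _ = A x := by rw [h1]
  have hPP : ∀ x, P (P x) = P x := by
    have h1 : P * P = P := by
      rw [hP, ← pow_add, show s + 1 + (s + 1) = s + (2 + s) by omega, pow_add, hpot,
        ← pow_succ]
    intro x
    calc P (P x) = (P * P) x := (ContinuousLinearMap.mul_apply _ _ _).symm
      _ = P x := by rw [h1]
  have hkerP : ∀ h : Lp ℝ 2 μ, 0 ≤ h → P h = 0 → h = 0 := by
    intro h h0 hPh
    refine hker h ?_ h0
    rw [← hAP h, hPh, map_zero]
  set V := LinearMap.range (A : Lp ℝ 2 μ →ₗ[ℝ] Lp ℝ 2 μ) with hVdef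
  have hmemV : ∀ x, x ∈ V ↔ P x = x := by
    intro x
    constructor
    · rintro ⟨y, rfl⟩
      exact hPA y
    · intro hx
      exact ⟨(A ^ s) x, by
        show A ((A ^ s) x) = x
        rw [← ContinuousLinearMap.mul_apply, ← pow_succ', hx]⟩
  have hVinf : ∀ x ∈ V, ∀ y ∈ V, x ⊓ y ∈ V := by
    intro x hx y hy
    rw [hmemV] at hx hy ⊢
    have h1 : P (x ⊓ y) ≤ x ⊓ y := by
      refine le_inf ?_ ?_
      · have := hmono (inf_le_left (a := x) (b := y)); rwa [hx] at this
      · have := hmono (inf_le_right (a := x) (b := y)); rwa [hy] at this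
    have h2 : P (x ⊓ y - P (x ⊓ y)) = 0 := by
      rw [map_sub, hPP, sub_self]
    have h3 : x ⊓ y - P (x ⊓ y) = 0 := hkerP _ (sub_nonneg.mpr h1) h2
    have h4 := sub_eq_zero.mp h3
    exact h4.symm
  -- finite dimensionality via Riesz's lemma
  set Q : Lp ℝ 2 μ →L[ℝ] Lp ℝ 2 μ := P - 1 with hQ
  set W : Submodule ℝ (Lp ℝ 2 μ) := LinearMap.ker (Q : Lp ℝ 2 μ →ₗ[ℝ] Lp ℝ 2 μ) with hW
  have hWV : ∀ x, x ∈ W ↔ x ∈ V := by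
    intro x
    rw [hmemV, hW, LinearMap.mem_ker]
    constructor
    · intro h
      have : P x - x = 0 := by
        simpa [hQ, ContinuousLinearMap.sub_apply, ContinuousLinearMap.one_apply] using h
      exact sub_eq_zero.mp this
    · intro h
      show Q x = 0
      simp [hQ, ContinuousLinearMap.sub_apply, ContinuousLinearMap.one_apply, h]
  have hVW : V = W := by
    ext x; rw [hWV]
  have hPcomp : IsCompactOperator (⇑P) := by
    have hfun : ⇑P = ⇑(A ^ s) ∘ ⇑A := by
      funext x
      rw [hP, Function.comp_apply, ← ContinuousLinearMap.mul_apply, ← pow_succ]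
    rw [hfun]
    exact hcompact.continuous_comp (A ^ s).continuous
  haveI hWfd : FiniteDimensional ℝ ↥W := by
    have hP' : IsCompactOperator ⇑(P : Lp ℝ 2 μ →ₗ[ℝ] Lp ℝ 2 μ) := by
      simpa using hPcomp
    obtain ⟨K₀, hK₀c, hK₀sub⟩ := hP'.image_closedBall_subset_compact 1
    refine FiniteDimensional.of_isCompact_closedBall₀ ℝ (r := 1) one_pos ?_
    rw [Subtype.isCompact_iff]
    set B := Subtype.val '' (Metric.closedBall (0 : ↥W) 1) with hB
    have hBeq : B = (W : Set (Lp ℝ 2 μ)) ∩ Metric.closedBall 0 1 := by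
      ext x
      constructor
      · rintro ⟨w, hw, rfl⟩
        refine ⟨w.2, ?_⟩
        rw [Metric.mem_closedBall] at hw ⊢
        rwa [Subtype.dist_eq] at hw
      · rintro ⟨hxW, hx⟩
        refine ⟨⟨x, hxW⟩, ?_, rfl⟩
        rw [Metric.mem_closedBall] at hx ⊢
        rwa [Subtype.dist_eq]
    have hBclosed : IsClosed B := by
      rw [hBeq]
      exact (ContinuousLinearMap.isClosed_ker Q).inter Metric.isClosed_closedBall
    have hBsub : B ⊆ K₀ := by
      rw [hBeq]
      rintro x ⟨hxW, hx⟩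
      have hfix : P x = x := (hmemV x).mp ((hWV x).mp hxW)
      refine hK₀sub ⟨x, hx, ?_⟩
      simpa using hfix
    exact hK₀c.of_isClosed_subset hBclosed hBsub
  haveI hVfd : FiniteDimensional ℝ ↥V := by
    rw [hVW]; exact hWfd
  obtain ⟨b, hb0, hbd⟩ :=
    exists_disjoint_basis (μ := μ) (Module.finrank ℝ ↥V) V hVinf hVfd rfl
  refine ⟨Module.finrank ℝ ↥V, b, hb0, ?_⟩
  intro i j hij
  have hinf := hbd i j hij
  have hae : ∀ᵐ x ∂μ,
      min (((b i : ↥V) : Lp ℝ 2 μ) x) (((b j : ↥V) : Lp ℝ 2 μ) x) = 0 ∧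
      0 ≤ ((b i : ↥V) : Lp ℝ 2 μ) x ∧ 0 ≤ ((b j : ↥V) : Lp ℝ 2 μ) x := by
    filter_upwards [inf_eq_zero_ae hinf, nonneg_ae (hb0 i), nonneg_ae (hb0 j)] with x h1 h2 h3
    exact ⟨h1, h2, h3⟩
  refine measure_mono_null ?_ (ae_iff.mp hae)
  rintro x ⟨hxi, hxj⟩
  rw [Function.mem_support] at hxi hxj
  intro hcon
  obtain ⟨h1, h2, h3⟩ := hcon
  have hi : 0 < ((b i : ↥V) : Lp ℝ 2 μ) x := h2.lt_of_ne (Ne.symm hxi)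
  have hj : 0 < ((b j : ↥V) : Lp ℝ 2 μ) x := h3.lt_of_ne (Ne.symm hxj)
  have : 0 < min (((b i : ↥V) : Lp ℝ 2 μ) x) (((b j : ↥V) : Lp ℝ 2 μ) x) := lt_min hi hj
  rw [h1] at this
  exact lt_irrefl 0 this
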